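/- For every nonempty open subset O of ℓ², it holds that P(O) > 0. -/

import Mathlib

open MeasureTheory Filter Metric Set
open scoped ENNReal NNReal Topology ComplexOrder

noncomputable section


noncomputable section

abbrev H : Type := lp (fun _ : ℕ => ℂ) 2

/-- The direction vector: `(true, j) ↦ e_j` (the `x_j` direction) and
`(false, j) ↦ √-1 • e_j` (the `y_j` direction). -/
noncomputable def dir : Bool × ℕ → H :=
  fun d => if d.1 then lp.single 2 d.2 (1 : ℂ) else lp.single 2 d.2 Complex.I

/-- The partial derivative of `f` at `z` in the direction `v` (junk value if it does not exist):
`lim_{ℝ ∋ τ → 0} (f (z + τ • v) - f z)/τ`. -/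
noncomputable def pder (v : H) (f : H → ℂ) (z : H) : ℂ :=
  deriv (fun τ : ℝ => f (z + τ • v)) 0

/-- Existence of the partial derivative of `f` at `z` in the direction `v`. -/
def HasPD (v : H) (f : H → ℂ) (z : H) : Prop :=
  DifferentiableAt ℝ (fun τ : ℝ => f (z + τ • v)) 0

/-- `coordD (true, j) = D_{x_j}`, `coordD (false, j) = D_{y_j}`. -/
noncomputable def coordD (d : Bool × ℕ) (f : H → ℂ) : H → ℂ := pder (dir d) f

/-- Iterated coordinatewise partial derivatives. -/
noncomputable def iterD : List (Bool × ℕ) → (H → ℂ) → H → ℂ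
  | [], f => f
  | d :: L, f => coordD d (iterD L f)

/-- `f ∈ C^k(V)` : all partial derivatives of order `< k` exist on `V`, and all iterated
partial derivatives of order `≤ k` are continuous on `V`. -/
def MemCk (V : Set H) (k : ℕ) (f : H → ℂ) : Prop :=
  (∀ L : List (Bool × ℕ), L.length ≤ k → ContinuousOn (iterD L f) V) ∧
  (∀ L : List (Bool × ℕ), L.length < k → ∀ d : Bool × ℕ, ∀ z ∈ V, HasPD (dir d) (iterD L f) z)

/-- `f ∈ C^∞(V)`. -/
def MemCinf (V : Set H) (f : H → ℂ) : Prop := ∀ k : ℕ, MemCk V k f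

/-- `f ∈ C^k_b(V)` : moreover `f` and its partial derivatives up to order `k` are bounded. -/
def MemCkb (V : Set H) (k : ℕ) (f : H → ℂ) : Prop :=
  MemCk V k f ∧ ∀ L : List (Bool × ℕ), L.length ≤ k → ∃ M : ℝ, ∀ z ∈ V, ‖iterD L f z‖ ≤ M

/-- `S ⊂∘ V` : `S` is uniformly included in `V`. -/
def UnifIncl (S V : Set H) : Prop :=
  ∃ r R : ℝ, 0 < r ∧ 0 < R ∧ (∀ z ∈ S, Metric.ball z r ⊆ V) ∧ S ⊆ Metric.ball 0 R

/-- The support of `f` relative to `V` (the closure, in the subspace topology of `V`,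
of `{z ∈ V | f z ≠ 0}`). -/
def suppIn (V : Set H) (f : H → ℂ) : Set H := V ∩ closure {z | z ∈ V ∧ f z ≠ 0}

/-- `f ∈ C^k_0(V)`. -/
def MemCkZero (V : Set H) (k : ℕ) (f : H → ℂ) : Prop :=
  MemCkb V k f ∧ UnifIncl (suppIn V f) V

/-- `f ∈ C^∞_0(V)`. -/
def MemCinfZero (V : Set H) (f : H → ℂ) : Prop := ∀ k : ℕ, MemCkZero V k f

/-- `∂_j f`. -/
noncomputable def pd (j : ℕ) (f : H → ℂ) (z : H) : ℂ :=
  (coordD (true, j) f z - Complex.I * coordD (false, j) f z) / 2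

/-- `∂̄_j f`. -/
noncomputable def dbar (j : ℕ) (f : H → ℂ) (z : H) : ℂ :=
  (coordD (true, j) f z + Complex.I * coordD (false, j) f z) / 2

/-- `δ_j f = ∂_j f - (z̄_j/(2 a_j²)) f`. -/
noncomputable def deltaOp (a : ℕ → ℝ) (j : ℕ) (f : H → ℂ) (z : H) : ℂ :=
  pd j f z - (starRingEnd ℂ) (z j) / (2 * (a j : ℂ) ^ 2) * f z

/-- The boundedness condition defining `C¹_F(V)`:
`sup_E (|f| + ∑_i (|D_{x_i} f|² + |D_{y_i} f|²)) < ∞` for every `E ⊂∘ V`. -/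
def FBound (V : Set H) (f : H → ℂ) : Prop :=
  ∀ E : Set H, UnifIncl E V → ∃ M : ℝ, ∀ z ∈ E,
    ENNReal.ofReal ‖f z‖ +
      ∑' j : ℕ, (ENNReal.ofReal (‖coordD (true, j) f z‖ ^ 2) +
        ENNReal.ofReal (‖coordD (false, j) f z‖ ^ 2)) ≤ ENNReal.ofReal M

/-- `f ∈ C¹_F(V)`. -/
def MemC1F (V : Set H) (f : H → ℂ) : Prop := MemCk V 1 f ∧ FBound V f

/-- `f ∈ C^∞_{0,F}(V) = C^∞_0(V) ∩ C¹_F(V)`. -/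
def MemC0F (V : Set H) (f : H → ℂ) : Prop := MemCinfZero V f ∧ MemC1F V f

/-- Iterated Wirtinger derivatives: `(true, j) ↦ ∂_j`, `(false, j) ↦ ∂̄_j`. -/
noncomputable def wIter : List (Bool × ℕ) → (H → ℂ) → H → ℂ
  | [], f => f
  | (b, j) :: L, f => if b then pd j (wIter L f) else dbar j (wIter L f)

/-- `f ∈ C^∞_{0,F^∞}(V)` : `f ∈ C^∞_0(V)` and `∂_α ∂̄_β f ∈ C¹_F(V)` for all
finitely supported multi-indices `α`, `β`. -/
def MemC0Finf (V : Set H) (f : H → ℂ) : Prop :=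
  MemCinfZero V f ∧
  ∀ Lα Lβ : List ℕ,
    MemC1F V (wIter (Lα.map (fun i => (true, i)) ++ Lβ.map (fun j => (false, j))) f)

/-- A real-valued function regarded as a complex-valued one. -/
def cplx (φ : H → ℝ) : H → ℂ := fun z => (φ z : ℂ)

/-- The Levi form `∑_{1 ≤ i,j ≤ n} (∂_i ∂̄_j η)(z) ζ_i conj(ζ_j)`. -/
noncomputable def herm (η : H → ℂ) (n : ℕ) (z : H) (ζ : ℕ → ℂ) : ℂ :=
  ∑ i ∈ Finset.range n, ∑ j ∈ Finset.range n,
    pd i (dbar j η) z * ζ i * (starRingEnd ℂ) (ζ j)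

/-- Plurisubharmonicity inequality (the order on `ℂ` is the `ComplexOrder`). -/
def PSH (V : Set H) (η : H → ℂ) : Prop :=
  ∀ n : ℕ, ∀ z ∈ V, ∀ ζ : ℕ → ℂ, 0 ≤ herm η n z ζ

/-- `α` is an exhaustion function of `V`. -/
def Exhausts (V : Set H) (α : H → ℝ) : Prop :=
  ∀ τ : ℝ, UnifIncl {z | z ∈ V ∧ α z ≤ τ} V

/-- `η` is a plurisubharmonic exhaustion function of `V` of class `C^∞_F(V)`. -/
def IsPSHExhaustion (V : Set H) (η : H → ℝ) : Prop :=
  MemCinf V (cplx η) ∧ FBound V (cplx η) ∧ Exhausts V η ∧ PSH V (cplx η)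

/-- `V` is a pseudo-convex domain in `ℓ²`. -/
def Pseudoconvex (V : Set H) : Prop :=
  IsOpen V ∧ V.Nonempty ∧ ∃ η : H → ℝ, IsPSHExhaustion V η

/-- `d(E₁, E₂)`, with value `∞` when either set is empty. -/
noncomputable def setEDist (E₁ E₂ : Set H) : ℝ≥0∞ :=
  ⨅ z₁ ∈ E₁, ⨅ z₂ ∈ E₂, edist z₁ z₂

/-- `d_V(S) = min{d(S, ∂V), 1/sup_{z ∈ S} ‖z‖}` (conventions `1/0 = ∞`, `1/∞ = 0`). -/
noncomputable def dV (V S : Set H) : ℝ≥0∞ :=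
  min (setEDist S (frontier V)) (⨆ z ∈ S, (‖z‖₊ : ℝ≥0∞))⁻¹

/-- The Gaussian probability measure `𝒩_σ` on `ℂ`. -/
noncomputable def gauss (σ : ℝ) : Measure ℂ :=
  volume.withDensity fun z =>
    ENNReal.ofReal ((2 * Real.pi * σ ^ 2)⁻¹ * Real.exp (-(z.re ^ 2 + z.im ^ 2) / (2 * σ ^ 2)))

/-- `P` is the Borel probability measure on `ℓ²` induced by the product of the Gaussian
measures `𝒩_{a_i}`, characterized through its finite-dimensional cylinder marginals. -/
def IsGaussMeasure [MeasurableSpace H] (a : ℕ → ℝ) (P : Measure H) : Prop :=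
  IsProbabilityMeasure P ∧
  ∀ (n : ℕ) (E : ℕ → Set ℂ), (∀ i, MeasurableSet (E i)) →
    P {z : H | ∀ i < n, z i ∈ E i} = ∏ i ∈ Finset.range n, gauss (a i) (E i)



set_option maxHeartbeats 1000000

lemma gauss_lintegral (σ : ℝ) (hσ : 0 < σ) :
    ∫⁻ z : ℂ, ENNReal.ofReal (Real.exp (-(z.re ^ 2 + z.im ^ 2) / (2 * σ ^ 2))) =
      ENNReal.ofReal (2 * Real.pi * σ ^ 2) := by
  have hb : (0:ℝ) < (2 * σ ^ 2)⁻¹ := by positivity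
  have hm : Measurable fun x : ℝ => ENNReal.ofReal (Real.exp (-(2 * σ ^ 2)⁻¹ * x ^ 2)) := by
    measurability
  have h1 : ∫⁻ x : ℝ, ENNReal.ofReal (Real.exp (-(2 * σ ^ 2)⁻¹ * x ^ 2))
      = ENNReal.ofReal (Real.sqrt (Real.pi / (2 * σ ^ 2)⁻¹)) := by
    rw [← ofReal_integral_eq_lintegral_ofReal (integrable_exp_neg_mul_sq hb)
      (Filter.Eventually.of_forall fun x => (Real.exp_pos _).le), integral_gaussian]
  have key := Complex.volume_preserving_equiv_real_prod.lintegral_comp_emb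
      Complex.measurableEquivRealProd.measurableEmbedding
      (fun p : ℝ × ℝ => ENNReal.ofReal (Real.exp (-(2*σ^2)⁻¹ * p.1 ^ 2)) *
          ENNReal.ofReal (Real.exp (-(2*σ^2)⁻¹ * p.2 ^ 2)))
  have heq : ∀ z : ℂ,
      ENNReal.ofReal (Real.exp (-(2*σ^2)⁻¹ * (Complex.measurableEquivRealProd z).1 ^ 2)) *
        ENNReal.ofReal (Real.exp (-(2*σ^2)⁻¹ * (Complex.measurableEquivRealProd z).2 ^ 2))
      = ENNReal.ofReal (Real.exp (-(z.re ^ 2 + z.im ^ 2) / (2 * σ ^ 2))) := by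
    intro z
    rw [← ENNReal.ofReal_mul (Real.exp_pos _).le, ← Real.exp_add]
    have h1 : (Complex.measurableEquivRealProd z).1 = z.re := rfl
    have h2 : (Complex.measurableEquivRealProd z).2 = z.im := rfl
    rw [h1, h2]
    congr 1
    field_simp
    ring
  simp only [heq] at key
  rw [key, Measure.volume_eq_prod ℝ ℝ, lintegral_prod_mul hm.aemeasurable hm.aemeasurable, h1,
    ← ENNReal.ofReal_mul (Real.sqrt_nonneg _),
    Real.mul_self_sqrt (by positivity)]
  congr 1
  field_simp

lemma normsq_eq (z : ℂ) : z.re ^ 2 + z.im ^ 2 = ‖z‖ ^ 2 := by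
  rw [show ‖z‖ ^ 2 = Complex.normSq z from by rw [Complex.sq_norm],
    Complex.normSq_apply]
  ring

lemma gauss_apply (σ : ℝ) {s : Set ℂ} (hs : MeasurableSet s) :
    gauss σ s = ∫⁻ z in s,
      ENNReal.ofReal ((2 * Real.pi * σ ^ 2)⁻¹ * Real.exp (-(z.re ^ 2 + z.im ^ 2) / (2 * σ ^ 2))) :=
  withDensity_apply _ hs

lemma gauss_univ (σ : ℝ) (hσ : 0 < σ) : gauss σ Set.univ = 1 := by
  rw [gauss_apply σ MeasurableSet.univ, setLIntegral_univ]
  simp_rw [ENNReal.ofReal_mul (by positivity : (0:ℝ) ≤ (2 * Real.pi * σ ^ 2)⁻¹)]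
  rw [lintegral_const_mul _ (by measurability), gauss_lintegral σ hσ,
    ← ENNReal.ofReal_mul (by positivity)]
  rw [inv_mul_cancel₀ (by positivity), ENNReal.ofReal_one]

lemma gauss_tail (σ : ℝ) (hσ : 0 < σ) (z₀ : ℂ) (t : ℝ) (ht : 0 ≤ t) :
    gauss σ ((closedBall z₀ t)ᶜ) ≤
      ENNReal.ofReal (2 * Real.exp ((‖z₀‖ ^ 2 - t ^ 2 / 2) / (4 * σ ^ 2))) := by
  rw [gauss_apply σ measurableSet_closedBall.compl]
  have hstep : ∀ z ∈ (closedBall z₀ t)ᶜ,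
      ENNReal.ofReal ((2 * Real.pi * σ ^ 2)⁻¹ * Real.exp (-(z.re ^ 2 + z.im ^ 2) / (2 * σ ^ 2)))
      ≤ ENNReal.ofReal (Real.exp ((‖z₀‖ ^ 2 - t ^ 2 / 2) / (4 * σ ^ 2)) *
          ((2 * Real.pi * σ ^ 2)⁻¹ * Real.exp (-(z.re ^ 2 + z.im ^ 2) / (4 * σ ^ 2)))) := by
    intro z hz
    apply ENNReal.ofReal_le_ofReal
    rw [normsq_eq]
    have hd : t < dist z z₀ := by simpa [not_le] using hz
    have h2 : t ^ 2 / 2 - ‖z₀‖ ^ 2 ≤ ‖z‖ ^ 2 := by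
      have h1 : dist z z₀ ^ 2 ≤ (‖z‖ + ‖z₀‖) ^ 2 := by
        have h := norm_sub_le z z₀
        rw [dist_eq_norm]
        nlinarith [norm_nonneg (z - z₀), norm_nonneg z, norm_nonneg z₀]
      nlinarith [sq_nonneg (‖z‖ - ‖z₀‖)]
    have hexp : Real.exp (-‖z‖ ^ 2 / (2 * σ ^ 2)) ≤
        Real.exp ((‖z₀‖ ^ 2 - t ^ 2 / 2) / (4 * σ ^ 2)) * Real.exp (-‖z‖ ^ 2 / (4 * σ ^ 2)) := by
      rw [← Real.exp_add]
      apply Real.exp_le_exp.mpr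
      rw [← add_div, div_le_div_iff₀ (by positivity) (by positivity)]
      nlinarith [sq_nonneg σ]
    calc (2 * Real.pi * σ ^ 2)⁻¹ * Real.exp (-‖z‖ ^ 2 / (2 * σ ^ 2))
        ≤ (2 * Real.pi * σ ^ 2)⁻¹ * (Real.exp ((‖z₀‖ ^ 2 - t ^ 2 / 2) / (4 * σ ^ 2)) *
            Real.exp (-‖z‖ ^ 2 / (4 * σ ^ 2))) :=
          mul_le_mul_of_nonneg_left hexp (by positivity)
      _ = Real.exp ((‖z₀‖ ^ 2 - t ^ 2 / 2) / (4 * σ ^ 2)) *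
            ((2 * Real.pi * σ ^ 2)⁻¹ * Real.exp (-‖z‖ ^ 2 / (4 * σ ^ 2))) := by ring
  have hmeas2 : Measurable fun z : ℂ => ENNReal.ofReal (Real.exp ((‖z₀‖ ^ 2 - t ^ 2 / 2) / (4 * σ ^ 2)) *
      ((2 * Real.pi * σ ^ 2)⁻¹ * Real.exp (-(z.re ^ 2 + z.im ^ 2) / (4 * σ ^ 2)))) := by
    apply Measurable.ennreal_ofReal
    apply Measurable.const_mul
    apply Measurable.const_mul
    exact (((Complex.measurable_re.pow_const 2).add (Complex.measurable_im.pow_const 2)).neg.div_const _).exp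
  have step1 : ∫⁻ z in (closedBall z₀ t)ᶜ,
        ENNReal.ofReal ((2 * Real.pi * σ ^ 2)⁻¹ * Real.exp (-(z.re ^ 2 + z.im ^ 2) / (2 * σ ^ 2)))
      ≤ ∫⁻ z in (closedBall z₀ t)ᶜ,
        ENNReal.ofReal (Real.exp ((‖z₀‖ ^ 2 - t ^ 2 / 2) / (4 * σ ^ 2)) *
          ((2 * Real.pi * σ ^ 2)⁻¹ * Real.exp (-(z.re ^ 2 + z.im ^ 2) / (4 * σ ^ 2)))) :=
    setLIntegral_mono hmeas2 hstep
  have step2 : ∫⁻ z in (closedBall z₀ t)ᶜ,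
        ENNReal.ofReal (Real.exp ((‖z₀‖ ^ 2 - t ^ 2 / 2) / (4 * σ ^ 2)) *
          ((2 * Real.pi * σ ^ 2)⁻¹ * Real.exp (-(z.re ^ 2 + z.im ^ 2) / (4 * σ ^ 2))))
      ≤ ∫⁻ z : ℂ, ENNReal.ofReal (Real.exp ((‖z₀‖ ^ 2 - t ^ 2 / 2) / (4 * σ ^ 2)) *
          ((2 * Real.pi * σ ^ 2)⁻¹ * Real.exp (-(z.re ^ 2 + z.im ^ 2) / (4 * σ ^ 2)))) :=
    setLIntegral_le_lintegral _ _
  have step3 : ∫⁻ z : ℂ, ENNReal.ofReal (Real.exp ((‖z₀‖ ^ 2 - t ^ 2 / 2) / (4 * σ ^ 2)) *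
          ((2 * Real.pi * σ ^ 2)⁻¹ * Real.exp (-(z.re ^ 2 + z.im ^ 2) / (4 * σ ^ 2))))
      ≤ ENNReal.ofReal (2 * Real.exp ((‖z₀‖ ^ 2 - t ^ 2 / 2) / (4 * σ ^ 2))) := by
    simp_rw [ENNReal.ofReal_mul (Real.exp_nonneg _),
      ENNReal.ofReal_mul (by positivity : (0:ℝ) ≤ (2 * Real.pi * σ ^ 2)⁻¹)]
    rw [lintegral_const_mul _ (by
      apply Measurable.const_mul
      exact (((Complex.measurable_re.pow_const 2).add
        (Complex.measurable_im.pow_const 2)).neg.div_const _).exp.ennreal_ofReal),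
      lintegral_const_mul _ (by
      exact (((Complex.measurable_re.pow_const 2).add
        (Complex.measurable_im.pow_const 2)).neg.div_const _).exp.ennreal_ofReal)]
    have h42 : ∀ z : ℂ, -(z.re ^ 2 + z.im ^ 2) / (4 * σ ^ 2)
        = -(z.re ^ 2 + z.im ^ 2) / (2 * (Real.sqrt 2 * σ) ^ 2) := by
      intro z
      rw [mul_pow, Real.sq_sqrt (by norm_num : (0:ℝ) ≤ 2)]
      ring_nf
    simp_rw [h42]
    rw [gauss_lintegral (Real.sqrt 2 * σ) (by positivity)]
    rw [← ENNReal.ofReal_mul (by positivity), ← ENNReal.ofReal_mul (Real.exp_nonneg _)]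
    apply ENNReal.ofReal_le_ofReal
    rw [mul_pow, Real.sq_sqrt (by norm_num : (0:ℝ) ≤ 2)]
    rw [show (2:ℝ) * Real.pi * (2 * σ ^ 2) = (2 * Real.pi * σ ^ 2) * 2 by ring]
    rw [inv_mul_cancel_left₀ (by positivity)]
    rw [mul_comm]
  exact le_trans step1 (le_trans step2 step3)

lemma gauss_ball_pos (σ : ℝ) (hσ : 0 < σ) (z₀ : ℂ) (t : ℝ) (ht : 0 < t) :
    0 < gauss σ (closedBall z₀ t) := by
  rw [gauss_apply σ measurableSet_closedBall]
  set c : ℝ := (2 * Real.pi * σ ^ 2)⁻¹ * Real.exp (-(‖z₀‖ + t) ^ 2 / (2 * σ ^ 2)) with hc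
  have hcpos : 0 < c := by positivity
  have hlow : ∀ z ∈ closedBall z₀ t, ENNReal.ofReal c ≤
      ENNReal.ofReal ((2 * Real.pi * σ ^ 2)⁻¹ * Real.exp (-(z.re ^ 2 + z.im ^ 2) / (2 * σ ^ 2))) := by
    intro z hz
    apply ENNReal.ofReal_le_ofReal
    apply mul_le_mul_of_nonneg_left _ (by positivity)
    apply Real.exp_le_exp.mpr
    rw [normsq_eq]
    have hzb : ‖z‖ ≤ ‖z₀‖ + t := by
      have h := mem_closedBall.mp hz
      rw [dist_eq_norm] at h
      calc ‖z‖ = ‖z - z₀ + z₀‖ := by ring_nf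
        _ ≤ ‖z - z₀‖ + ‖z₀‖ := norm_add_le _ _
        _ ≤ ‖z₀‖ + t := by linarith
    have hsq : ‖z‖ ^ 2 ≤ (‖z₀‖ + t) ^ 2 := by nlinarith [norm_nonneg z]
    rw [div_le_div_iff₀ (by positivity) (by positivity)]
    nlinarith [mul_le_mul_of_nonneg_right hsq (show (0:ℝ) ≤ 2 * σ ^ 2 by positivity)]
  calc (0:ENNReal) < ENNReal.ofReal c * volume (closedBall z₀ t) := by
        apply ENNReal.mul_pos
        · simpa using hcpos
        · exact (Metric.measure_closedBall_pos (volume : Measure ℂ) z₀ ht).ne'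
    _ = ∫⁻ _ in closedBall z₀ t, ENNReal.ofReal c := by
        rw [setLIntegral_const, mul_comm]
    _ ≤ ∫⁻ z in closedBall z₀ t,
        ENNReal.ofReal ((2 * Real.pi * σ ^ 2)⁻¹ * Real.exp (-(z.re ^ 2 + z.im ^ 2) / (2 * σ ^ 2))) :=
        setLIntegral_mono (by measurability) hlow

lemma eval_continuous (i : ℕ) : Continuous fun f : H => (f : ∀ j, ℂ) i := by
  apply LipschitzWith.continuous (K := 1)
  apply LipschitzWith.of_dist_le_mul
  intro f g
  rw [NNReal.coe_one, one_mul, dist_eq_norm, dist_eq_norm]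
  have h : (f : ∀ j, ℂ) i - (g : ∀ j, ℂ) i = ((f - g : H) : ∀ j, ℂ) i := by
    rw [lp.coeFn_sub]; rfl
  rw [h]
  exact lp.norm_apply_le_norm (by norm_num) (f - g) i


lemma prod_one_sub_le (s : Finset ℕ) (q : ℕ → ℝ) (h0 : ∀ i ∈ s, 0 ≤ q i)
    (h1 : ∀ i ∈ s, q i ≤ 1) : 1 - ∑ i ∈ s, q i ≤ ∏ i ∈ s, (1 - q i) := by
  classical
  induction s using Finset.induction with
  | empty => simp
  | insert x s' hx ih =>
    rw [Finset.sum_insert hx, Finset.prod_insert hx]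
    have hq0 : 0 ≤ q x := h0 x (Finset.mem_insert_self _ _)
    have hq1 : q x ≤ 1 := h1 x (Finset.mem_insert_self _ _)
    have ih' := ih (fun i hi => h0 i (Finset.mem_insert_of_mem hi))
      (fun i hi => h1 i (Finset.mem_insert_of_mem hi))
    have hs0 : 0 ≤ ∑ i ∈ s', q i :=
      Finset.sum_nonneg fun i hi => h0 i (Finset.mem_insert_of_mem hi)
    nlinarith [mul_le_mul_of_nonneg_left ih' (by linarith : (0:ℝ) ≤ 1 - q x)]


/-- Every nonempty open subset of `ℓ²` has positive measure under the
Gaussian product measure `P`. -/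
theorem gaussMeasure_pos_of_isOpen [MeasurableSpace H] [BorelSpace H]
    (a : ℕ → ℝ) (ha : ∀ i, 0 < a i) (hsa : Summable a) (ha1 : ∑' i, a i < 1)
    (P : Measure H) (hP : IsGaussMeasure a P)
    (O : Set H) (hO : IsOpen O) (hOne : O.Nonempty) :
    0 < P O := by
  classical
  obtain ⟨z₀, hz₀O⟩ := hOne
  obtain ⟨ε, hε, hball⟩ := Metric.isOpen_iff.mp hO z₀ hz₀O
  set δ : ℝ := ε ^ 2 / 100 with hδdef
  have hδ : 0 < δ := by positivity
  set b : ℕ → ℝ := fun i => ‖(z₀ : ∀ j, ℂ) i‖ ^ 2 with hbdef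
  have hb0 : ∀ i, 0 ≤ b i := fun i => sq_nonneg _
  have hb : Summable b := by
    have h := (lp.memℓp z₀).summable (by norm_num : (0:ℝ) < (2:ℝ≥0∞).toReal)
    have : ∀ i, ‖(z₀ : ∀ j, ℂ) i‖ ^ ((2:ℝ≥0∞).toReal) = b i := by
      intro i
      rw [show ((2:ℝ≥0∞).toReal) = ((2:ℕ):ℝ) by norm_num, Real.rpow_natCast]
    exact (summable_congr this).mp h
  -- choose N for tail of b
  obtain ⟨N, hN⟩ : ∃ N, ∑' k, b (k + N) < δ :=
    ((tendsto_sum_nat_add b).eventually_lt_const hδ).exists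
  -- tsq
  set tsq : ℕ → ℝ := fun i => δ * a i + (if i < N then 0 else 4 * b i) with htsqdef
  have htsqpos : ∀ i, 0 < tsq i := by
    intro i
    have h1 : 0 < δ * a i := mul_pos hδ (ha i)
    have h2 : (0:ℝ) ≤ if i < N then 0 else 4 * b i := by
      split
      · exact le_refl 0
      · nlinarith [hb0 i]
    show 0 < δ * a i + if i < N then 0 else 4 * b i
    linarith
  have htsq0 : ∀ i, 0 ≤ tsq i := fun i => (htsqpos i).le
  set t : ℕ → ℝ := fun i => Real.sqrt (tsq i) with htdef
  have ht0 : ∀ i, 0 ≤ t i := fun i => Real.sqrt_nonneg _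
  have htpos : ∀ i, 0 < t i := fun i => Real.sqrt_pos.mpr (htsqpos i)
  have htsq_eq : ∀ i, t i ^ 2 = tsq i := fun i => Real.sq_sqrt (htsq0 i)
  -- summability of tsq
  have hite : Summable fun i => if i < N then (0:ℝ) else 4 * b i := by
    apply Summable.of_nonneg_of_le (fun i => by split; exacts [le_refl 0, by nlinarith [hb0 i]])
      (fun i => ?_) (hb.mul_left 4)
    split
    · positivity
    · exact le_refl _
  have htsq_sum : Summable tsq := (hsa.mul_left δ).add hite
  -- total bound
  have htsq_total : ∑' i, tsq i ≤ 5 * δ := by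
    have e1 : ∑' i, tsq i = δ * (∑' i, a i) + ∑' i, (if i < N then (0:ℝ) else 4 * b i) := by
      rw [show (∑' i, tsq i) = ∑' i, (δ * a i + if i < N then (0:ℝ) else 4 * b i) from rfl,
        Summable.tsum_add (hsa.mul_left δ) hite, tsum_mul_left]
    have e2 : ∑' i, (if i < N then (0:ℝ) else 4 * b i) ≤ 4 * δ := by
      have h3 := Summable.sum_add_tsum_nat_add (f := fun i => if i < N then (0:ℝ) else 4 * b i) N hite
      have h4 : ∑ i ∈ Finset.range N, (if i < N then (0:ℝ) else 4 * b i) = 0 := by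
        apply Finset.sum_eq_zero
        intro i hi
        simp [Finset.mem_range.mp hi]
      have h5 : ∀ k : ℕ, (if k + N < N then (0:ℝ) else 4 * b (k + N)) = 4 * b (k + N) := by
        intro k
        simp [Nat.not_lt.mpr (Nat.le_add_left N k)]
      rw [h4, zero_add] at h3
      rw [← h3]
      simp_rw [h5]
      rw [tsum_mul_left]
      nlinarith [hN]
    have e3 : δ * (∑' i, a i) ≤ δ := by nlinarith [ha1, hδ, (tsum_nonneg (fun i => (ha i).le) : (0:ℝ) ≤ ∑' i, a i)]
    linarith [e1, e2, e3]
  -- the sets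
  set E : ℕ → Set ℂ := fun i => closedBall ((z₀ : ∀ j, ℂ) i) (t i) with hEdef
  have hE : ∀ i, MeasurableSet (E i) := fun i => measurableSet_closedBall
  set p : ℕ → ℝ≥0∞ := fun i => gauss (a i) (E i) with hpdef
  have hp1 : ∀ i, p i ≤ 1 := by
    intro i
    rw [← gauss_univ (a i) (ha i)]
    exact measure_mono (subset_univ _)
  have hpfin : ∀ i, p i ≠ ∞ := fun i => (lt_of_le_of_lt (hp1 i) ENNReal.one_lt_top).ne
  have hppos : ∀ i, 0 < p i := fun i => gauss_ball_pos (a i) (ha i) _ (t i) (htpos i)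
  set pR : ℕ → ℝ := fun i => (p i).toReal with hpRdef
  have hpR0 : ∀ i, 0 < pR i := fun i => ENNReal.toReal_pos (hppos i).ne' (hpfin i)
  have hpR1 : ∀ i, pR i ≤ 1 := by
    intro i
    have := ENNReal.toReal_mono (by norm_num) (hp1 i)
    simpa using this
  -- tail bound
  set q : ℕ → ℝ := fun i => 2 * Real.exp ((b i - tsq i / 2) / (4 * (a i) ^ 2)) with hqdef
  have hq0 : ∀ i, 0 ≤ q i := fun i => by positivity
  have h1mp : ∀ i, 1 - q i ≤ pR i := by
    intro i
    have htail := gauss_tail (a i) (ha i) ((z₀ : ∀ j, ℂ) i) (t i) (ht0 i)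
    rw [htsq_eq i] at htail
    have hcompl := measure_add_measure_compl (μ := gauss (a i)) (hE i)
    rw [gauss_univ (a i) (ha i)] at hcompl
    have htailR : (gauss (a i) ((E i)ᶜ)).toReal ≤ q i := by
      apply ENNReal.toReal_le_of_le_ofReal (hq0 i)
      exact htail
    have hsum : pR i + (gauss (a i) ((E i)ᶜ)).toReal = 1 := by
      have hcfin : gauss (a i) ((E i)ᶜ) ≠ ∞ := by
        intro hcon
        rw [hcon, add_top] at hcompl
        exact ENNReal.top_ne_one hcompl
      rw [← ENNReal.toReal_add (hpfin i) hcfin, hcompl]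
      rfl
    linarith
  -- q small for large i
  have hqsmall : ∀ i, N ≤ i → q i ≤ 16 * a i / δ := by
    intro i hi
    have hbq : b i - tsq i / 2 ≤ -(δ * a i / 2) := by
      show b i - (δ * a i + if i < N then (0:ℝ) else 4 * b i) / 2 ≤ -(δ * a i / 2)
      rw [if_neg (Nat.not_lt.mpr hi)]
      nlinarith [hb0 i]
    have hexp : Real.exp ((b i - tsq i / 2) / (4 * (a i) ^ 2)) ≤ Real.exp (-(δ / (8 * a i))) := by
      apply Real.exp_le_exp.mpr
      rw [div_le_iff₀ (mul_pos (by norm_num) (pow_pos (ha i) 2) : (0:ℝ) < 4 * (a i) ^ 2)]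
      have hai : a i ≠ 0 := (ha i).ne'
      have : -(δ / (8 * a i)) * (4 * a i ^ 2) = -(δ * a i / 2) := by
        field_simp
        ring
      rw [this]
      exact hbq
    have hexp2 : Real.exp (-(δ / (8 * a i))) ≤ 8 * a i / δ := by
      rw [Real.exp_neg]
      rw [inv_le_comm₀ (Real.exp_pos _) (div_pos (mul_pos (by norm_num) (ha i)) hδ)]
      calc (8 * a i / δ)⁻¹ = δ / (8 * a i) := by rw [inv_div]
        _ ≤ Real.exp (δ / (8 * a i)) := by
            have := Real.add_one_le_exp (δ / (8 * a i))
            linarith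
    calc q i ≤ 2 * (8 * a i / δ) := by
          apply mul_le_mul_of_nonneg_left (le_trans hexp hexp2) (by norm_num)
      _ = 16 * a i / δ := by ring
  -- choose N' for tail of a
  obtain ⟨N'', hN''⟩ : ∃ M, ∑' k, a (k + M) < δ / 64 :=
    ((tendsto_sum_nat_add a).eventually_lt_const (by positivity)).exists
  set N' : ℕ := max N N'' with hN'def
  have hNN' : N ≤ N' := le_max_left _ _
  have hN''N' : N'' ≤ N' := le_max_right _ _
  have haN' : ∑' k, a (k + N') < δ / 64 := by
    calc ∑' k, a (k + N') ≤ ∑' k, a (k + N'') := by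
          apply Summable.tsum_le_tsum_of_inj (fun k => k + (N' - N''))
            (add_left_injective (N' - N'')) (fun k _ => (ha _).le)
            (fun k => by
              show a (k + N') ≤ a (k + (N' - N'') + N'')
              apply le_of_eq
              congr 1
              omega)
            ((summable_nat_add_iff N').mpr hsa) ((summable_nat_add_iff N'').mpr hsa)
      _ < δ / 64 := hN''
  -- sum of q over Ico N' n is at most 1/4
  have hqsum : ∀ n, ∑ i ∈ Finset.Ico N' n, q i ≤ 1 / 4 := by
    intro n
    calc ∑ i ∈ Finset.Ico N' n, q i ≤ ∑ i ∈ Finset.Ico N' n, 16 * a i / δ := by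
          apply Finset.sum_le_sum
          intro i hi
          exact hqsmall i (le_trans hNN' (Finset.mem_Ico.mp hi).1)
      _ = (16 / δ) * ∑ i ∈ Finset.Ico N' n, a i := by
          rw [Finset.mul_sum]
          apply Finset.sum_congr rfl
          intro i _
          ring
      _ ≤ (16 / δ) * (δ / 64) := by
          apply mul_le_mul_of_nonneg_left _ (by positivity)
          rw [Finset.sum_Ico_eq_sum_range]
          calc ∑ k ∈ Finset.range (n - N'), a (N' + k)
              = ∑ k ∈ Finset.range (n - N'), a (k + N') := by
                apply Finset.sum_congr rfl
                intro k _
                congr 1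
                omega
            _ ≤ ∑' k, a (k + N') := Summable.sum_le_tsum _ (fun k _ => (ha _).le)
                ((summable_nat_add_iff N').mpr hsa)
            _ ≤ δ / 64 := haN'.le
      _ ≤ 1 / 4 := by
          rw [div_mul_div_comm]
          rw [div_le_div_iff₀ (by positivity) (by norm_num)]
          nlinarith
  -- truncated q
  set q' : ℕ → ℝ := fun i => min (q i) 1 with hq'def
  have hq'0 : ∀ i, 0 ≤ q' i := fun i => le_min (hq0 i) zero_le_one
  have hq'1 : ∀ i, q' i ≤ 1 := fun i => min_le_right _ _
  have h1mp' : ∀ i, 1 - q' i ≤ pR i := by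
    intro i
    rcases le_or_gt (q i) 1 with h | h
    · rw [show q' i = q i from min_eq_left h]
      exact h1mp i
    · rw [show q' i = 1 from min_eq_right h.le]
      simpa using (hpR0 i).le
  -- uniform lower bound on partial products
  set c : ℝ := (∏ i ∈ Finset.range N', pR i) * (1 / 2) with hcdef
  have hcpos : 0 < c := by
    apply mul_pos _ (by norm_num)
    exact Finset.prod_pos fun i _ => hpR0 i
  have hprod : ∀ n, N' ≤ n → c ≤ ∏ i ∈ Finset.range n, pR i := by
    intro n hn
    rw [← Finset.prod_range_mul_prod_Ico pR hn]
    apply mul_le_mul_of_nonneg_left _ (Finset.prod_nonneg fun i _ => (hpR0 i).le)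
    calc (1:ℝ) / 2 ≤ 1 - ∑ i ∈ Finset.Ico N' n, q' i := by
          have : ∑ i ∈ Finset.Ico N' n, q' i ≤ ∑ i ∈ Finset.Ico N' n, q i :=
            Finset.sum_le_sum fun i _ => min_le_left _ _
          have := hqsum n
          linarith
      _ ≤ ∏ i ∈ Finset.Ico N' n, (1 - q' i) :=
          prod_one_sub_le _ _ (fun i _ => hq'0 i) (fun i _ => hq'1 i)
      _ ≤ ∏ i ∈ Finset.Ico N' n, pR i :=
          Finset.prod_le_prod (fun i _ => by linarith [hq'1 i]) (fun i _ => h1mp' i)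
  -- cylinder sets
  set C : ℕ → Set H := fun n => {z : H | ∀ i < n, (z : ∀ j, ℂ) i ∈ E i} with hCdef
  have hPC : ∀ n, P (C n) = ∏ i ∈ Finset.range n, p i := fun n => hP.2 n E hE
  have hCmeas : ∀ n, MeasurableSet (C n) := by
    intro n
    have : C n = ⋂ (i : ℕ), ⋂ (_ : i < n), (fun z : H => (z : ∀ j, ℂ) i) ⁻¹' (E i) := by
      ext z
      simp [hCdef, Set.mem_iInter]
    rw [this]
    exact MeasurableSet.iInter fun i => MeasurableSet.iInter fun _ =>
      ((eval_continuous i).measurable) (hE i)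
  have hCanti : Antitone C := by
    intro m n hmn z hz i hi
    exact hz i (lt_of_lt_of_le hi hmn)
  have hPClow : ∀ n, N' ≤ n → ENNReal.ofReal c ≤ P (C n) := by
    intro n hn
    rw [hPC n]
    have : (∏ i ∈ Finset.range n, p i) = ENNReal.ofReal (∏ i ∈ Finset.range n, pR i) := by
      rw [ENNReal.ofReal_prod_of_nonneg (fun i _ => (hpR0 i).le)]
      apply Finset.prod_congr rfl
      intro i _
      rw [show pR i = (p i).toReal from rfl, ENNReal.ofReal_toReal (hpfin i)]
    rw [this]
    exact ENNReal.ofReal_le_ofReal (hprod n hn)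
  -- pass to the limit
  have hPtend := tendsto_measure_iInter_atTop (μ := P)
    (fun n => (hCmeas n).nullMeasurableSet) hCanti ⟨0, by
      have := hP.1.measure_univ
      exact ne_of_lt (lt_of_le_of_lt (measure_mono (subset_univ _)) (by rw [this]; exact ENNReal.one_lt_top))⟩
  have hPiInter : ENNReal.ofReal c ≤ P (⋂ n, C n) := by
    apply ge_of_tendsto hPtend
    filter_upwards [Filter.eventually_ge_atTop N'] with n hn
    exact hPClow n hn
  -- the intersection is contained in the ball
  have hsub : (⋂ n, C n) ⊆ ball z₀ ε := by
    intro z hz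
    have hzE : ∀ i, (z : ∀ j, ℂ) i ∈ E i := by
      intro i
      exact (Set.mem_iInter.mp hz (i + 1)) i (Nat.lt_succ_self i)
    have hterm : ∀ i, ‖((z - z₀ : H) : ∀ j, ℂ) i‖ ^ 2 ≤ tsq i := by
      intro i
      have hd : dist ((z : ∀ j, ℂ) i) ((z₀ : ∀ j, ℂ) i) ≤ t i := mem_closedBall.mp (hzE i)
      have : ‖((z - z₀ : H) : ∀ j, ℂ) i‖ = dist ((z : ∀ j, ℂ) i) ((z₀ : ∀ j, ℂ) i) := by
        rw [lp.coeFn_sub, dist_eq_norm]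
        rfl
      rw [this, ← htsq_eq i]
      have h0 : (0:ℝ) ≤ dist ((z : ∀ j, ℂ) i) ((z₀ : ∀ j, ℂ) i) := dist_nonneg
      nlinarith
    have hzsum : Summable fun i => ‖((z - z₀ : H) : ∀ j, ℂ) i‖ ^ 2 := by
      have h := (lp.memℓp (z - z₀)).summable (by norm_num : (0:ℝ) < (2:ℝ≥0∞).toReal)
      have heq : ∀ i, ‖((z - z₀ : H) : ∀ j, ℂ) i‖ ^ ((2:ℝ≥0∞).toReal) = ‖((z - z₀ : H) : ∀ j, ℂ) i‖ ^ 2 := by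
        intro i
        rw [show ((2:ℝ≥0∞).toReal) = ((2:ℕ):ℝ) by norm_num, Real.rpow_natCast]
      exact (summable_congr heq).mp h
    have hnorm2 : ‖(z - z₀ : H)‖ ^ 2 ≤ 5 * δ := by
      have hfe := lp.norm_rpow_eq_tsum (p := 2) (by norm_num) (z - z₀ : H)
      have h2 : ‖(z - z₀ : H)‖ ^ ((2:ℝ≥0∞).toReal) = ‖(z - z₀ : H)‖ ^ 2 := by
        rw [show ((2:ℝ≥0∞).toReal) = ((2:ℕ):ℝ) by norm_num, Real.rpow_natCast]
      have h3 : ∀ i, ‖((z - z₀ : H) : ∀ j, ℂ) i‖ ^ ((2:ℝ≥0∞).toReal) = ‖((z - z₀ : H) : ∀ j, ℂ) i‖ ^ 2 := by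
        intro i
        rw [show ((2:ℝ≥0∞).toReal) = ((2:ℕ):ℝ) by norm_num, Real.rpow_natCast]
      rw [h2] at hfe
      simp_rw [h3] at hfe
      rw [hfe]
      exact le_trans (Summable.tsum_le_tsum hterm hzsum htsq_sum) htsq_total
    have hnlt : ‖(z - z₀ : H)‖ < ε := by
      nlinarith [norm_nonneg (z - z₀ : H), hε]
    rw [mem_ball, dist_eq_norm]
    exact hnlt
  -- conclude
  calc (0:ℝ≥0∞) < ENNReal.ofReal c := by simpa using hcpos
    _ ≤ P (⋂ n, C n) := hPiInter
    _ ≤ P (ball z₀ ε) := measure_mono hsub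
    _ ≤ P O := measure_mono hball
end
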